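/- arXiv:2103.04668 — 4 statements merged into one kernel-verified Lean document; each statement's English description precedes it below -/
import Mathlib

section
/- Let D be a distance graph on a finite set X and let g be a td-norm. Define the g-length of a path as the g-aggregation of its edge weights, and the distance closure d^{T,g}_{ij} as the infimum over all paths from i to j of their g-length. If an edge d_{ij} satisfies d_{ij} > d^{T,g}_{ij} (it is semi-triangular), then no shortest g-path between any pair of nodes uses the edge (i,j); consequently the distance closure of the backbone subgraph B^g (containing only edges with d_{ij} = d^{T,g}_{ij}) equals the distance closure of D. -/
open scoped ENNReal

variable {X : Type*}

/-- The `g`-length of the path `i, k₁, ..., kₘ, j` in the distance graph `d`. -/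
def pathLen (g : ℝ≥0∞ → ℝ≥0∞ → ℝ≥0∞) (d : X → X → ℝ≥0∞) : X → List X → X → ℝ≥0∞
  | i, [], j => d i j
  | i, k :: ks, j => g (d i k) (pathLen g d k ks j)

/-- The shortest-path distance closure `d^{T,g}`: infimum of `g`-lengths over all paths. -/
noncomputable def dClosure (g : ℝ≥0∞ → ℝ≥0∞ → ℝ≥0∞) (d : X → X → ℝ≥0∞) (i j : X) : ℝ≥0∞ :=
  ⨅ p : List X, pathLen g d i p j

/-- The distance backbone `B^g`: keeps an edge iff its weight equals the closure value,
otherwise sets it to `∞` (no edge). -/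
noncomputable def backbone (g : ℝ≥0∞ → ℝ≥0∞ → ℝ≥0∞) (d : X → X → ℝ≥0∞) :
    X → X → ℝ≥0∞ :=
  fun i j => if d i j = dClosure g d i j then d i j else ⊤

section Aux

variable {g : ℝ≥0∞ → ℝ≥0∞ → ℝ≥0∞}
variable (hcomm : ∀ a b, g a b = g b a)
variable (hassoc : ∀ a b c, g a (g b c) = g (g a b) c)
variable (hmono : ∀ a b c e, a ≤ c → b ≤ e → g a b ≤ g c e)
variable (hid : ∀ a, g a 0 = a)

include hmono hid in
lemma g_left_le (a b : ℝ≥0∞) : a ≤ g a b := by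
  have := hmono a 0 a b le_rfl zero_le
  rwa [hid] at this

include hcomm hmono hid in
lemma g_right_le (a b : ℝ≥0∞) : b ≤ g a b := by
  rw [hcomm]; exact g_left_le hmono hid b a

include hmono in
lemma pathLen_mono {d e : X → X → ℝ≥0∞} (h : ∀ a b, d a b ≤ e a b) :
    ∀ (p : List X) (i j : X), pathLen g d i p j ≤ pathLen g e i p j := by
  intro p
  induction p with
  | nil => intro i j; exact h i j
  | cons k ks ih => intro i j; exact hmono _ _ _ _ (h i k) (ih k j)

include hassoc in
lemma pathLen_append (d : X → X → ℝ≥0∞) :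
    ∀ (p q : List X) (i k j : X),
      pathLen g d i (p ++ k :: q) j = g (pathLen g d i p k) (pathLen g d k q j) := by
  intro p
  induction p with
  | nil => intro q i k j; rfl
  | cons a p ih =>
      intro q i k j
      show g (d i a) (pathLen g d a (p ++ k :: q) j) = _
      rw [ih, hassoc]; rfl

lemma exists_dup {l : List X} (h : ¬ l.Nodup) :
    ∃ (s t r : List X) (a : X), l = s ++ a :: (t ++ a :: r) := by
  induction l with
  | nil => simp at h
  | cons x xs ih =>
      rw [List.nodup_cons] at h
      by_cases hx : x ∈ xs
      · obtain ⟨t, r, rfl⟩ := List.append_of_mem hx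
        exact ⟨[], t, r, x, rfl⟩
      · have hxs : ¬ xs.Nodup := fun hn => h ⟨hx, hn⟩
        obtain ⟨s, t, r, a, rfl⟩ := ih hxs
        exact ⟨x :: s, t, r, a, rfl⟩

include hcomm hassoc hmono hid in
lemma pathLen_shorten (d : X → X → ℝ≥0∞) {p : List X} {i j : X}
    (h : ¬ (i :: p).Nodup) :
    ∃ q : List X, q.length < p.length ∧ pathLen g d i q j ≤ pathLen g d i p j := by
  obtain ⟨s, t, r, a, hsr⟩ := exists_dup h
  match s, hsr with
  | [], hsr =>
      obtain ⟨rfl, rfl⟩ : i = a ∧ p = t ++ a :: r := by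
        simpa using hsr
      refine ⟨r, by simp; omega, ?_⟩
      rw [pathLen_append hassoc]
      exact g_right_le hcomm hmono hid _ _
  | x :: s, hsr =>
      obtain ⟨rfl, rfl⟩ : i = x ∧ p = s ++ a :: (t ++ a :: r) := by
        simpa using hsr
      refine ⟨s ++ a :: r, by simp, ?_⟩
      rw [pathLen_append hassoc, pathLen_append hassoc, pathLen_append hassoc]
      exact hmono _ _ _ _ le_rfl (g_right_le hcomm hmono hid _ _)

include hcomm hassoc hmono hid in
lemma exists_short [Fintype X] (d : X → X → ℝ≥0∞) :
    ∀ (p : List X) (i j : X), ∃ q : List X, q.length < Fintype.card X ∧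
      pathLen g d i q j ≤ pathLen g d i p j := by
  suffices h : ∀ (n : ℕ) (p : List X), p.length ≤ n → ∀ i j : X,
      ∃ q : List X, q.length < Fintype.card X ∧
        pathLen g d i q j ≤ pathLen g d i p j by
    intro p i j; exact h p.length p le_rfl i j
  intro n
  induction n with
  | zero =>
      intro p hp i j
      have hp0 : p = [] := List.eq_nil_of_length_eq_zero (Nat.le_zero.mp hp)
      subst hp0
      by_cases hlen : ([] : List X).length < Fintype.card X
      · exact ⟨[], hlen, le_rfl⟩
      · haveI : Nonempty X := ⟨i⟩
        exact absurd (Fintype.card_pos (α := X)) (by simpa using hlen)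
  | succ n ih =>
      intro p hp i j
      by_cases hlen : p.length < Fintype.card X
      · exact ⟨p, hlen, le_rfl⟩
      · have hnd : ¬ (i :: p).Nodup := by
          intro hnd
          have := hnd.length_le_card
          simp only [List.length_cons] at this
          omega
        obtain ⟨q, hq, hle⟩ := pathLen_shorten hcomm hassoc hmono hid d hnd
        obtain ⟨r, hr, hle'⟩ := ih q (by omega) i j
        exact ⟨r, hr, hle'.trans hle⟩

include hcomm hassoc hmono hid in
lemma exists_attain [Fintype X] (d : X → X → ℝ≥0∞) (i j : X) :
    ∃ p : List X, pathLen g d i p j = dClosure g d i j := by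
  haveI : Nonempty X := ⟨i⟩
  set f : List X → ℝ≥0∞ := fun p => pathLen g d i p j with hf
  set S : Set (List X) := {l : List X | l.length < Fintype.card X} with hS
  have hSfin : S.Finite := List.finite_length_lt X _
  have hSne : (f '' S).Nonempty :=
    Set.Nonempty.image f ⟨[], by simp only [hS, Set.mem_setOf_eq, List.length_nil]; exact Fintype.card_pos⟩
  have hmem := hSne.csInf_mem (hSfin.image f)
  obtain ⟨p, hpS, hp⟩ := hmem
  refine ⟨p, le_antisymm ?_ ?_⟩
  · -- f p ≤ dClosure: f p = sInf (f '' S) ≤ f q for short q below any path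
    show f p ≤ _
    rw [hp]
    refine le_iInf fun q => ?_
    obtain ⟨r, hr, hle⟩ := exists_short hcomm hassoc hmono hid d q i j
    have hrmem : f r ∈ f '' S := ⟨r, hr, rfl⟩
    exact (csInf_le (OrderBot.bddBelow _) hrmem).trans hle
  · exact iInf_le _ p

include hcomm hassoc hmono hid in
lemma dClosure_triangle [Fintype X] (d : X → X → ℝ≥0∞) (i k j : X) :
    dClosure g d i j ≤ g (dClosure g d i k) (dClosure g d k j) := by
  obtain ⟨p, hp⟩ := exists_attain hcomm hassoc hmono hid d i k
  obtain ⟨q, hq⟩ := exists_attain hcomm hassoc hmono hid d k j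
  calc dClosure g d i j ≤ pathLen g d i (p ++ k :: q) j := iInf_le _ _
    _ = g (pathLen g d i p k) (pathLen g d k q j) := pathLen_append hassoc d p q i k j
    _ = _ := by rw [hp, hq]

lemma dClosure_le_self (g : ℝ≥0∞ → ℝ≥0∞ → ℝ≥0∞) (d : X → X → ℝ≥0∞) (i j : X) :
    dClosure g d i j ≤ d i j := iInf_le _ ([] : List X)

include hcomm hassoc hmono hid in
lemma splice [Fintype X] (d : X → X → ℝ≥0∞) :
    ∀ (p : List X) (i j : X),
      (∀ a b : X, d a b ≤ pathLen g d i p j →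
        dClosure g (backbone g d) a b ≤ d a b) →
      dClosure g (backbone g d) i j ≤ pathLen g d i p j := by
  intro p
  induction p with
  | nil => intro i j h; exact h i j le_rfl
  | cons k ks ih =>
      intro i j h
      have h1 : dClosure g (backbone g d) i k ≤ d i k :=
        h i k (g_left_le hmono hid _ _)
      have h2 : dClosure g (backbone g d) k j ≤ pathLen g d k ks j :=
        ih k j fun a b hab => h a b (hab.trans (g_right_le hcomm hmono hid _ _))
      calc dClosure g (backbone g d) i j
          ≤ g (dClosure g (backbone g d) i k) (dClosure g (backbone g d) k j) :=
            dClosure_triangle hcomm hassoc hmono hid _ i k j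
        _ ≤ g (d i k) (pathLen g d k ks j) := hmono _ _ _ _ h1 h2
        _ = pathLen g d i (k :: ks) j := rfl

include hcomm hassoc hmono hid in
lemma claimB [Fintype X] (d : X → X → ℝ≥0∞) :
    ∀ u v : X, dClosure g (backbone g d) u v ≤ d u v := by
  classical
  set vals : Finset ℝ≥0∞ := Finset.image (fun p : X × X => d p.1 p.2) Finset.univ with hvals
  set rank : ℝ≥0∞ → ℕ := fun a => (vals.filter (· < a)).card with hrank
  have hranklt : ∀ a b u v : X, d a b < d u v → rank (d a b) < rank (d u v) := by
    intro a b u v hlt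
    apply Finset.card_lt_card
    constructor
    · intro x hx
      simp only [Finset.mem_filter] at hx ⊢
      exact ⟨hx.1, hx.2.trans hlt⟩
    · intro hsub
      have habmem : d a b ∈ vals.filter (· < d u v) := by
        simp only [Finset.mem_filter, hvals, Finset.mem_image]
        exact ⟨⟨(a, b), Finset.mem_univ _, rfl⟩, hlt⟩
      have := hsub habmem
      simp only [Finset.mem_filter] at this
      exact absurd this.2 (lt_irrefl _)
  have key : ∀ (n : ℕ) (u v : X), rank (d u v) ≤ n →
      dClosure g (backbone g d) u v ≤ d u v := by
    intro n
    induction n with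
    | zero =>
        intro u v hn
        by_cases hb : d u v = dClosure g d u v
        · have : backbone g d u v = d u v := by rw [backbone, if_pos hb]
          calc dClosure g (backbone g d) u v ≤ backbone g d u v :=
                dClosure_le_self g _ u v
            _ = d u v := this
        · have hlt : dClosure g d u v < d u v :=
            lt_of_le_of_ne (dClosure_le_self g d u v) (Ne.symm hb)
          obtain ⟨p, hp⟩ : ∃ p : List X, pathLen g d u p v < d u v := by
            rw [dClosure] at hlt
            exact iInf_lt_iff.mp hlt
          have := splice hcomm hassoc hmono hid d p u v fun a b hab => by
            have : rank (d a b) < rank (d u v) := hranklt a b u v (hab.trans_lt hp)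
            omega
          exact this.trans hp.le
    | succ n ihn =>
        intro u v hn
        by_cases hb : d u v = dClosure g d u v
        · have : backbone g d u v = d u v := by rw [backbone, if_pos hb]
          calc dClosure g (backbone g d) u v ≤ backbone g d u v :=
                dClosure_le_self g _ u v
            _ = d u v := this
        · have hlt : dClosure g d u v < d u v :=
            lt_of_le_of_ne (dClosure_le_self g d u v) (Ne.symm hb)
          obtain ⟨p, hp⟩ : ∃ p : List X, pathLen g d u p v < d u v := by
            rw [dClosure] at hlt
            exact iInf_lt_iff.mp hlt
          have := splice hcomm hassoc hmono hid d p u v fun a b hab => by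
            have hr : rank (d a b) < rank (d u v) := hranklt a b u v (hab.trans_lt hp)
            exact ihn a b (by omega)
          exact this.trans hp.le
  intro u v
  exact key (rank (d u v)) u v le_rfl

end Aux

/-- **Backbone Sufficiency.** For any td-norm `g`, semi-triangular edges
(`d i j > d^{T,g} i j`) are unnecessary: the distance closure of the backbone subgraph
equals the distance closure of the original graph. -/
theorem backbone_sufficiency [Fintype X]
    (d : X → X → ℝ≥0∞) (hsymm : ∀ i j, d i j = d j i) (hrefl : ∀ i, d i i = 0)
    (g : ℝ≥0∞ → ℝ≥0∞ → ℝ≥0∞)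
    (hcomm : ∀ a b, g a b = g b a)
    (hassoc : ∀ a b c, g a (g b c) = g (g a b) c)
    (hmono : ∀ a b c e, a ≤ c → b ≤ e → g a b ≤ g c e)
    (hid : ∀ a, g a 0 = a) :
    ∀ i j, dClosure g (backbone g d) i j = dClosure g d i j := by
  intro i j
  apply le_antisymm
  · refine le_iInf fun p => ?_
    exact splice hcomm hassoc hmono hid d p i j
      fun a b _ => claimB hcomm hassoc hmono hid d a b
  · refine le_iInf fun p => (iInf_le _ p).trans ?_
    refine pathLen_mono hmono (fun a b => ?_) p i j
    unfold backbone
    split <;> simp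
end

section
/- If a distance graph D on a finite set X is connected (every pair of nodes is joined by a path of finite-weight edges), then for any td-norm g its distance backbone B^g is also connected. -/
open scoped ENNReal

variable {X : Type*}

/-- **Backbone Connectivity.** If the distance graph is connected (every pair of nodes is
joined by a chain of finite-weight edges), then for any td-norm `g` (with `g` finite on
finite inputs) the distance backbone is also connected: every pair of nodes is joined by a
chain of backbone edges (finite edges whose weight equals the closure value). -/
theorem backbone_connectivity [Fintype X]
    (d : X → X → ℝ≥0∞) (hsymm : ∀ i j, d i j = d j i) (hrefl : ∀ i, d i i = 0)
    (g : ℝ≥0∞ → ℝ≥0∞ → ℝ≥0∞)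
    (hcomm : ∀ a b, g a b = g b a)
    (hassoc : ∀ a b c, g a (g b c) = g (g a b) c)
    (hmono : ∀ a b c e, a ≤ c → b ≤ e → g a b ≤ g c e)
    (hid : ∀ a, g a 0 = a)
    (hfin : ∀ a b, a ≠ ⊤ → b ≠ ⊤ → g a b ≠ ⊤)
    (hconn : ∀ a b : X, Relation.ReflTransGen (fun u v => d u v ≠ ⊤) a b) :
    ∀ a b : X,
      Relation.ReflTransGen (fun u v => d u v ≠ ⊤ ∧ d u v = dClosure g d u v) a b := by
  classical
  have hub : ∀ i j, dClosure g d i j ≤ d i j := fun i j => iInf_le _ ([] : List X)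
  have hle_left : ∀ a r, a ≤ g a r := fun a r => by
    calc a = g a 0 := (hid a).symm
    _ ≤ g a r := hmono _ _ _ _ le_rfl zero_le
  have hle_right : ∀ a r, r ≤ g a r := fun a r => (hcomm r a ▸ hle_left r a : r ≤ g a r)
  set V : Finset ℝ≥0∞ := Finset.image (fun p : X × X => d p.1 p.2) Finset.univ with hV
  have hmemV : ∀ i j : X, d i j ∈ V := fun i j =>
    Finset.mem_image.2 ⟨(i, j), Finset.mem_univ _, rfl⟩
  have main : ∀ n : ℕ, ∀ a b : X, d a b ≠ ⊤ →
      (V.filter (fun x => x < d a b)).card ≤ n →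
      Relation.ReflTransGen (fun u v => d u v ≠ ⊤ ∧ d u v = dClosure g d u v) a b := by
    intro n
    induction n using Nat.strong_induction_on with
    | _ n IH =>
      intro a b hab hcard
      by_cases hbb : d a b = dClosure g d a b
      · exact Relation.ReflTransGen.single ⟨hab, hbb⟩
      · have hlt : dClosure g d a b < d a b := lt_of_le_of_ne (hub a b) (fun h => hbb h.symm)
        obtain ⟨p, hp⟩ : ∃ p : List X, pathLen g d a p b < d a b := by
          have := (iInf_lt_iff).1 hlt
          simpa using this
        have hyp : ∀ u v : X, d u v < d a b →
            Relation.ReflTransGen (fun u v => d u v ≠ ⊤ ∧ d u v = dClosure g d u v) u v := by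
          intro u v huv
          have hsub : (V.filter (fun x => x < d u v)).card <
              (V.filter (fun x => x < d a b)).card := by
            apply Finset.card_lt_card
            constructor
            · intro x hx
              simp only [Finset.mem_filter] at hx ⊢
              exact ⟨hx.1, hx.2.trans huv⟩
            · intro hsup
              have : d u v ∈ V.filter (fun x => x < d u v) :=
                hsup (Finset.mem_filter.2 ⟨hmemV u v, huv⟩)
              exact absurd (Finset.mem_filter.1 this).2 (lt_irrefl _)
          exact IH _ (lt_of_lt_of_le hsub hcard) u v (huv.trans_le le_top).ne le_rfl
        have chain : ∀ (q : List X) (i j : X), pathLen g d i q j < d a b →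
            Relation.ReflTransGen (fun u v => d u v ≠ ⊤ ∧ d u v = dClosure g d u v) i j := by
          intro q
          induction q with
          | nil => intro i j h; exact hyp i j h
          | cons k ks ihq =>
            intro i j h
            simp only [pathLen] at h
            have h1 : d i k < d a b := lt_of_le_of_lt (hle_left _ _) h
            have h2 : pathLen g d k ks j < d a b := lt_of_le_of_lt (hle_right _ _) h
            exact (hyp i k h1).trans (ihq k j h2)
        exact chain p a b hp
  intro a b
  have h := hconn a b
  induction h with
  | refl => exact Relation.ReflTransGen.refl
  | tail _ he ih =>
    exact ih.trans (main _ _ _ he le_rfl)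
end

section
/- Every bridge of a distance graph D belongs to its distance backbone B^g, for any td-norm g. That is, if deleting the edge (i,j) disconnects nodes i and j, then d_{ij} = d^{T,g}_{ij}, so the edge is in the backbone. -/
open scoped ENNReal

variable {X : Type*}

/-- **Backbone Contains All Bridges.** If the edge `(i,j)` is a bridge — deleting it
disconnects `i` from `j` — then the edge belongs to the distance backbone for any
td-norm `g`: `d i j = d^{T,g} i j`. -/
theorem backbone_contains_bridges [Fintype X]
    (d : X → X → ℝ≥0∞) (hsymm : ∀ i j, d i j = d j i) (hrefl : ∀ i, d i i = 0)
    (g : ℝ≥0∞ → ℝ≥0∞ → ℝ≥0∞)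
    (hcomm : ∀ a b, g a b = g b a)
    (hassoc : ∀ a b c, g a (g b c) = g (g a b) c)
    (hmono : ∀ a b c e, a ≤ c → b ≤ e → g a b ≤ g c e)
    (hid : ∀ a, g a 0 = a)
    (i j : X) (hedge : d i j ≠ ⊤)
    (hbridge : ¬ Relation.ReflTransGen
      (fun u v => d u v ≠ ⊤ ∧ ¬ ((u = i ∧ v = j) ∨ (u = j ∧ v = i))) i j) :
    d i j = dClosure g d i j := by
  set R : X → X → Prop :=
    fun u v => d u v ≠ ⊤ ∧ ¬ ((u = i ∧ v = j) ∨ (u = j ∧ v = i)) with hR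
  -- g a b ≥ a and g a b ≥ b
  have hga : ∀ a b : ℝ≥0∞, a ≤ g a b := fun a b => by
    calc a = g a 0 := (hid a).symm
    _ ≤ g a b := hmono a 0 a b le_rfl zero_le
  have hgb : ∀ a b : ℝ≥0∞, b ≤ g a b := fun a b => by
    rw [hcomm]; exact hga b a
  have key : ∀ (p : List X) (u : X),
      d i j ≤ pathLen g d u p j ∨ Relation.ReflTransGen R u j := by
    intro p
    induction p with
    | nil =>
      intro u
      by_cases hT : d u j = ⊤
      · left; simp [pathLen, hT]
      · by_cases hE : (u = i ∧ j = j) ∨ (u = j ∧ j = i)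
        · left
          rcases hE with ⟨hu, -⟩ | ⟨hu, hji⟩
          · subst hu; exact le_rfl
          · subst hu; subst hji; exact le_rfl
        · right
          exact Relation.ReflTransGen.single ⟨hT, hE⟩
    | cons k ks ih =>
      intro u
      rcases ih k with h | h
      · left
        exact le_trans h (hgb _ _)
      · by_cases hT : d u k = ⊤
        · left
          calc d i j ≤ (⊤ : ℝ≥0∞) := le_top
          _ = d u k := hT.symm
          _ ≤ pathLen g d u (k :: ks) j := hga _ _
        · by_cases hE : (u = i ∧ k = j) ∨ (u = j ∧ k = i)
          · left
            have : d u k = d i j := by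
              rcases hE with ⟨hu, hk⟩ | ⟨hu, hk⟩
              · subst hu; subst hk; rfl
              · subst_vars; apply hsymm
            calc d i j = d u k := this.symm
            _ ≤ pathLen g d u (k :: ks) j := hga _ _
          · right
            exact Relation.ReflTransGen.head ⟨hT, hE⟩ h
  apply le_antisymm
  · refine le_iInf fun p => ?_
    rcases key p i with h | h
    · exact h
    · exact absurd h hbridge
  · exact iInf_le _ ([] : List X)
end

section
/- For a distance graph D on a finite set X, the ultra-metric backbone is a subgraph of the metric backbone: every edge satisfying d_{ij} = d^{T,u}_{ij} (where path length is the maximum edge weight along the path) also satisfies d_{ij} = d^{T,m}_{ij} (where path length is the sum of edge weights along the path). -/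
open scoped ENNReal

variable {X : Type*}

/-- **Ultra-metric backbone is a subgraph of the metric backbone.** Every edge whose weight
equals its minimax (ultra-metric, `g = max`) closure value also equals its additive
(metric, `g = +`) closure value. -/
theorem ultrametric_backbone_subgraph_metric_backbone [Fintype X]
    (d : X → X → ℝ≥0∞) (hsymm : ∀ i j, d i j = d j i) (hrefl : ∀ i, d i i = 0)
    (i j : X)
    (hu : d i j = dClosure (fun a b => max a b) d i j) :
    d i j = dClosure (fun a b => a + b) d i j := by
  have key : ∀ (p : List X) (i : X), pathLen (fun a b => max a b) d i p j ≤
      pathLen (fun a b => a + b) d i p j := by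
    intro p
    induction p with
    | nil => intro i; simp [pathLen]
    | cons k ks ih =>
      intro i
      simp only [pathLen]
      exact max_le (le_self_add) (le_add_left (ih k))
  apply le_antisymm
  · rw [hu]
    exact le_iInf fun p => (iInf_le _ p).trans (key p i)
  · exact iInf_le (fun p => pathLen (fun a b => a + b) d i p j) []
end
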